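/- If h/k and h'/k' are two consecutive elements of the Farey sequence of order N (with h/k < h'/k'), then k·h' - h·k' = 1. -/

import Mathlib

/-- `h/k` is a member of the Farey sequence of order `N`. -/
def FareyMem (N h k : ℕ) : Prop :=
  h ≤ k ∧ k ≤ N ∧ 1 ≤ k ∧ Nat.gcd h k = 1

/-- `h/k < h'/k'` are consecutive elements of the Farey sequence of order `N`. -/
def FareyConsec (N h k h' k' : ℕ) : Prop :=
  FareyMem N h k ∧ FareyMem N h' k' ∧ (h : ℚ) / k < (h' : ℚ) / k' ∧
    ∀ a b : ℕ, FareyMem N a b →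
      ¬ ((h : ℚ) / k < (a : ℚ) / b ∧ (a : ℚ) / b < (h' : ℚ) / k')

/-- Existence of the shifted Bézout solution. -/
lemma farey_bezout (N h k : ℕ) (hg : Nat.gcd h k = 1) (hk1 : 1 ≤ k) (hkN : k ≤ N) :
    ∃ a b : ℤ, (k : ℤ) * a - (h : ℤ) * b = 1 ∧ 0 < b ∧ b ≤ N ∧ (N : ℤ) < b + k := by
  have hk0 : (0 : ℤ) < k := by exact_mod_cast hk1
  have hbezout : (h : ℤ) * Nat.gcdA h k + (k : ℤ) * Nat.gcdB h k = 1 := by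
    have := Nat.gcd_eq_gcd_ab h k
    rw [hg] at this
    exact_mod_cast this.symm
  refine ⟨Nat.gcdB h k + h * (((N : ℤ) + Nat.gcdA h k) / k),
         -(Nat.gcdA h k) + k * (((N : ℤ) + Nat.gcdA h k) / k), by linear_combination hbezout,
         ?_, ?_, ?_⟩ <;>
  · have hdm := Int.mul_ediv_add_emod ((N : ℤ) + Nat.gcdA h k) (k : ℤ)
    have hr0 : 0 ≤ ((N : ℤ) + Nat.gcdA h k) % k := Int.emod_nonneg _ hk0.ne'
    have hrk : ((N : ℤ) + Nat.gcdA h k) % k < k := Int.emod_lt_of_pos _ hk0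
    have hkNZ : (k : ℤ) ≤ N := by exact_mod_cast hkN
    omega

theorem farey_unimodular (N h k h' k' : ℕ) (hc : FareyConsec N h k h' k') :
    (k : ℤ) * h' - (h : ℤ) * k' = 1 := by
  obtain ⟨⟨hhk, hkN, hk1, hg⟩, ⟨hh'k', hk'N, hk'1, hg'⟩, hlt, hmax⟩ := hc
  have hk0 : (0 : ℤ) < k := by exact_mod_cast hk1
  have hk'0 : (0 : ℤ) < k' := by exact_mod_cast hk'1
  have hkQ : (0 : ℚ) < k := by exact_mod_cast hk1
  have hk'Q : (0 : ℚ) < k' := by exact_mod_cast hk'1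
  -- cross-multiplied form of h/k < h'/k'
  have e0 : (h : ℤ) * k' < (h' : ℤ) * k := by
    rw [div_lt_div_iff₀ hkQ hk'Q] at hlt
    exact_mod_cast hlt
  -- h < k
  have hhltk : (h : ℤ) < k := by
    by_contra hcon
    push_neg at hcon
    have hk_eq : (h : ℤ) = k := le_antisymm (by exact_mod_cast hhk) hcon
    have h2 : (h' : ℤ) ≤ k' := by exact_mod_cast hh'k'
    nlinarith [e0]
  obtain ⟨a, b, key, hb0, hbN, hNbk⟩ := farey_bezout N h k hg hk1 hkN
  have hh0 : (0 : ℤ) ≤ h := by positivity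
  have hbQ : (0 : ℚ) < (b : ℚ) := by exact_mod_cast hb0
  have ha0 : 0 < a := by
    rcases lt_or_ge 0 a with h1 | h1
    · exact h1
    · have h2 : (k : ℤ) * a ≤ 0 := mul_nonpos_of_nonneg_of_nonpos hk0.le h1
      nlinarith [key, hb0]
  have hab : a ≤ b := by
    nlinarith [key, hb0, hhltk]
  have hcop : Int.gcd a b = 1 := by
    rw [← Int.isCoprime_iff_gcd_eq_one]
    exact ⟨k, -h, by linear_combination key⟩
  have hmem : FareyMem N a.toNat b.toNat := by
    refine ⟨by omega, by omega, by omega, ?_⟩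
    have h1 : a.toNat = a.natAbs := by omega
    have h2 : b.toNat = b.natAbs := by omega
    rw [h1, h2]
    exact hcop
  have hcast_a : ((a.toNat : ℚ)) = ((a : ℤ) : ℚ) := by
    have : ((a.toNat : ℤ)) = a := Int.toNat_of_nonneg ha0.le
    exact_mod_cast congrArg (fun z : ℤ => (z : ℚ)) this
  have hcast_b : ((b.toNat : ℚ)) = ((b : ℤ) : ℚ) := by
    have : ((b.toNat : ℤ)) = b := Int.toNat_of_nonneg hb0.le
    exact_mod_cast congrArg (fun z : ℤ => (z : ℚ)) this
  -- h/k < a/b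
  have hlow : (h : ℚ) / k < ((a : ℤ) : ℚ) / ((b : ℤ) : ℚ) := by
    rw [div_lt_div_iff₀ hkQ hbQ]
    have : (h : ℤ) * b < a * k := by nlinarith [key, hb0]
    exact_mod_cast this
  have hnotmid := hmax a.toNat b.toNat hmem
  have hlow' : (h : ℚ) / k < (a.toNat : ℚ) / (b.toNat : ℚ) := by
    rw [hcast_a, hcast_b]; exact hlow
  have hge : ¬ ((a.toNat : ℚ) / b.toNat < (h' : ℚ) / k') := fun hc' =>
    hnotmid ⟨hlow', hc'⟩
  rw [hcast_a, hcast_b] at hge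
  have hge2 : (h' : ℤ) * b ≤ a * k' := by
    by_contra hcon
    push_neg at hcon
    apply hge
    rw [div_lt_div_iff₀ hbQ hk'Q]
    exact_mod_cast hcon
  -- show a*k' ≤ h'*b, else k' ≥ k + b > N
  have hle2 : a * k' ≤ (h' : ℤ) * b := by
    by_contra hcon
    push_neg at hcon
    have e1 : (h' : ℤ) * b + 1 ≤ a * k' := hcon
    have e2 : (h : ℤ) * k' + 1 ≤ (h' : ℤ) * k := e0
    have hid : (k' : ℤ) = k * (a * k' - h' * b) + b * ((h' : ℤ) * k - h * k') := by
      linear_combination (-(k' : ℤ)) * key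
    have hkb : (k : ℤ) + b ≤ k' := by
      rw [hid]
      have p1 : (k : ℤ) * 1 ≤ k * (a * k' - h' * b) :=
        mul_le_mul_of_nonneg_left (by linarith) hk0.le
      have p2 : b * 1 ≤ b * ((h' : ℤ) * k - h * k') :=
        mul_le_mul_of_nonneg_left (by linarith) hb0.le
      linarith
    have hk'NZ : (k' : ℤ) ≤ N := by exact_mod_cast hk'N
    omega
  have heq : a * k' = (h' : ℤ) * b := le_antisymm hle2 hge2
  -- determinant
  have hbd : b * ((k : ℤ) * h' - (h : ℤ) * k') = k' := by
    linear_combination (k' : ℤ) * key - (k : ℤ) * heq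
  have had : a * ((k : ℤ) * h' - (h : ℤ) * k') = h' := by
    have hstep : b * (a * ((k : ℤ) * h' - (h : ℤ) * k')) = b * h' := by
      calc b * (a * ((k : ℤ) * h' - (h : ℤ) * k'))
          = a * (b * ((k : ℤ) * h' - (h : ℤ) * k')) := by ring
        _ = a * k' := by rw [hbd]
        _ = h' * b := heq
        _ = b * h' := by ring
    exact mul_left_cancel₀ hb0.ne' hstep
  have hd1 : (1 : ℤ) ≤ (k : ℤ) * h' - (h : ℤ) * k' := by
    have hcomm : (k : ℤ) * h' = (h' : ℤ) * k := mul_comm _ _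
    linarith [e0]
  have hdvd : ((k : ℤ) * h' - (h : ℤ) * k') ∣ (1 : ℤ) := by
    have h1 : ((k : ℤ) * h' - (h : ℤ) * k') ∣ (h' : ℤ) := ⟨a, by linear_combination -had⟩
    have h2 : ((k : ℤ) * h' - (h : ℤ) * k') ∣ (k' : ℤ) := ⟨b, by linear_combination -hbd⟩
    have := Int.dvd_coe_gcd h1 h2
    rwa [Int.gcd_natCast_natCast, hg', Nat.cast_one] at this
  have := Int.le_of_dvd one_pos hdvd
  omega
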